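/- arXiv:1404.0050 — 2 statements merged into one kernel-verified Lean document; each statement's English description precedes it below -/
import Mathlib

section
/- For r ≥ 1 and the continuous function E_r(x) = 2(∑_{i=1}^m x_i)·log r − [∑_{i=1}^m x_i·log x_i + (1 − ∑_{i=1}^m x_i)·log(1 − ∑_{i=1}^m x_i)] on the standard simplex Σ_m (with the convention 0·log 0 = 0), one has ∫_{Σ_m} E_r(x) dx = 2m·log r/(m+1)! + (1/m!)·∑_{k=2}^{m+1} 1/k. -/
open MeasureTheory
open Real Finset

noncomputable def Hn (n : ℕ) : ℝ := ∑ k ∈ Finset.Icc 1 n, (1 : ℝ) / k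

lemma Hn_succ (n : ℕ) : Hn (n + 1) = Hn n + 1 / (n + 1) := by
  unfold Hn
  rw [Finset.sum_Icc_succ_top (by omega : 1 ≤ n + 1)]
  push_cast; ring

lemma Hn_one : Hn 1 = 1 := by simp [Hn]

noncomputable def Aa (j r : ℕ) : ℝ :=
  ∑ i ∈ Finset.range (j + 1), (j.choose i : ℝ) * (-1) ^ i / (i + r)

noncomputable def Bb (j r : ℕ) : ℝ :=
  ∑ i ∈ Finset.range (j + 1), (j.choose i : ℝ) * (-1) ^ i / ((i + r) ^ 2)

lemma Aa_rec (j r : ℕ) : Aa (j+1) r = Aa j r - Aa j (r+1) := by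
  unfold Aa
  rw [Finset.sum_range_succ' (fun i => ((j+1).choose i : ℝ) * (-1) ^ i / (i + r))]
  rw [Finset.sum_range_succ' (fun i => (j.choose i : ℝ) * (-1) ^ i / (i + r))]
  have h1 : ∀ i, (((j+1).choose (i+1) : ℝ)) = (j.choose i : ℝ) + (j.choose (i+1) : ℝ) := by
    intro i; rw [Nat.choose_succ_succ]; push_cast; ring
  simp only [h1]
  have h2 : ∑ i ∈ Finset.range (j+1), ((j.choose i : ℝ) + (j.choose (i+1) : ℝ)) * (-1)^(i+1) / ((i+1 : ℕ) + r)
      = (∑ i ∈ Finset.range (j+1), -((j.choose i : ℝ) * (-1)^i / (i + (r+1))))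
        + ∑ i ∈ Finset.range (j+1), -((j.choose (i+1) : ℝ) * (-1)^i / ((i+1:ℕ) + r)) := by
    rw [← Finset.sum_add_distrib]
    apply Finset.sum_congr rfl
    intro i _
    push_cast; ring
  rw [h2]
  have h3 : ∑ i ∈ Finset.range (j+1), -((j.choose (i+1) : ℝ) * (-1)^i / ((i+1:ℕ) + r))
      = ∑ i ∈ Finset.range j, -((j.choose (i+1) : ℝ) * (-1)^i / ((i+1:ℕ) + r)) := by
    rw [Finset.sum_range_succ]
    simp [Nat.choose_succ_self]
  rw [h3, Finset.sum_neg_distrib]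
  push_cast
  have h4 : ∑ i ∈ Finset.range j, -((j.choose (i+1) : ℝ) * (-1)^i / ((i:ℝ)+1 + r))
      = ∑ k ∈ Finset.range j, (j.choose (k+1) : ℝ) * (-1)^(k+1) / ((k:ℝ)+1 + r) := by
    apply Finset.sum_congr rfl; intro i _; ring
  rw [h4]
  simp only [Nat.choose_zero_right, Nat.cast_one, pow_zero]
  ring

lemma Bb_rec (j r : ℕ) : Bb (j+1) r = Bb j r - Bb j (r+1) := by
  unfold Bb
  rw [Finset.sum_range_succ' (fun i => ((j+1).choose i : ℝ) * (-1) ^ i / ((i + r)^2))]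
  rw [Finset.sum_range_succ' (fun i => (j.choose i : ℝ) * (-1) ^ i / ((i + r)^2))]
  have h1 : ∀ i : ℕ, (((j+1).choose (i+1) : ℝ)) = (j.choose i : ℝ) + (j.choose (i+1) : ℝ) := by
    intro i; rw [Nat.choose_succ_succ]; push_cast; ring
  simp only [h1]
  have h2 : ∑ i ∈ Finset.range (j+1), ((j.choose i : ℝ) + (j.choose (i+1) : ℝ)) * (-1)^(i+1) / (((i+1 : ℕ) + r)^2)
      = (∑ i ∈ Finset.range (j+1), -((j.choose i : ℝ) * (-1)^i / ((i + (r+1))^2)))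
        + ∑ i ∈ Finset.range (j+1), -((j.choose (i+1) : ℝ) * (-1)^i / (((i+1:ℕ) + r)^2)) := by
    rw [← Finset.sum_add_distrib]
    apply Finset.sum_congr rfl
    intro i _
    push_cast; ring
  rw [h2]
  have h3 : ∑ i ∈ Finset.range (j+1), -((j.choose (i+1) : ℝ) * (-1)^i / (((i+1:ℕ) + r)^2))
      = ∑ i ∈ Finset.range j, -((j.choose (i+1) : ℝ) * (-1)^i / (((i+1:ℕ) + r)^2)) := by
    rw [Finset.sum_range_succ]
    simp [Nat.choose_succ_self]
  rw [h3, Finset.sum_neg_distrib]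
  push_cast
  have h4 : ∑ i ∈ Finset.range j, -((j.choose (i+1) : ℝ) * (-1)^i / (((i:ℝ)+1 + r)^2))
      = ∑ k ∈ Finset.range j, (j.choose (k+1) : ℝ) * (-1)^(k+1) / (((k:ℝ)+1 + r)^2) := by
    apply Finset.sum_congr rfl; intro i _; ring
  rw [h4]
  simp only [Nat.choose_zero_right, Nat.cast_one, pow_zero]
  ring

lemma Aa_eq (j : ℕ) : ∀ r : ℕ, Aa j (r+1)
    = (r.factorial : ℝ) * (j.factorial : ℝ) / ((j + r + 1).factorial : ℝ) := by
  induction j with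
  | zero =>
      intro r
      unfold Aa
      rw [show (0:ℕ) + r + 1 = r + 1 from by omega, Nat.factorial_succ]
      have : ((r.factorial : ℝ)) ≠ 0 := Nat.cast_ne_zero.mpr (Nat.factorial_ne_zero _)
      simp
      field_simp
  | succ j IH =>
      intro r
      rw [Aa_rec j (r+1), IH r, IH (r+1)]
      have e1 : j + (r+1) + 1 = j + r + 2 := by omega
      have e2 : j + 1 + r + 1 = j + r + 2 := by omega
      rw [e1, e2, show (j+r+2) = (j+r+1)+1 from by omega, Nat.factorial_succ ((j+r+1)),
        Nat.factorial_succ r, Nat.factorial_succ j]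
      have h1 : ((j+r+1).factorial : ℝ) ≠ 0 := Nat.cast_ne_zero.mpr (Nat.factorial_ne_zero _)
      have h2 : ((j+r+1 : ℕ) : ℝ) + 1 ≠ 0 := by positivity
      push_cast
      field_simp
      ring

lemma Bb_eq (j : ℕ) : ∀ r : ℕ, Bb j (r+1)
    = (r.factorial : ℝ) * (j.factorial : ℝ) / ((j + r + 1).factorial : ℝ) * (Hn (j + r + 1) - Hn r) := by
  induction j with
  | zero =>
      intro r
      unfold Bb
      rw [show (0:ℕ) + r + 1 = r + 1 from by omega, Nat.factorial_succ, Hn_succ]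
      have h1 : ((r.factorial : ℝ)) ≠ 0 := Nat.cast_ne_zero.mpr (Nat.factorial_ne_zero _)
      have h2 : ((r:ℝ)) + 1 ≠ 0 := by positivity
      simp
      field_simp
  | succ j IH =>
      intro r
      rw [Bb_rec j (r+1), IH r, IH (r+1)]
      have e1 : j + (r+1) + 1 = j + r + 2 := by omega
      have e2 : j + 1 + r + 1 = j + r + 2 := by omega
      rw [e1, e2, show (j+r+2) = (j+r+1)+1 from by omega, Hn_succ (j+r+1), Hn_succ r,
        Nat.factorial_succ ((j+r+1)), Nat.factorial_succ r, Nat.factorial_succ j]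
      have h1 : ((j+r+1).factorial : ℝ) ≠ 0 := Nat.cast_ne_zero.mpr (Nat.factorial_ne_zero _)
      have h2 : ((j+r+1 : ℕ) : ℝ) + 1 ≠ 0 := by positivity
      have h3 : ((r:ℝ)) + 1 ≠ 0 := by positivity
      push_cast
      field_simp
      ring

lemma cont_pow_log (k : ℕ) (hk : 1 ≤ k) : Continuous (fun t : ℝ => t ^ k * Real.log t) := by
  obtain ⟨k, rfl⟩ : ∃ k', k = k' + 1 := ⟨k - 1, by omega⟩
  have : (fun t : ℝ => t ^ (k+1) * Real.log t) = fun t : ℝ => t ^ k * (t * Real.log t) := by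
    funext t; ring
  rw [this]
  exact (continuous_pow k).mul Real.continuous_mul_log

lemma int_pow_log (k : ℕ) (hk : 1 ≤ k) {a : ℝ} (ha : 0 ≤ a) :
    ∫ t in (0:ℝ)..a, t ^ k * Real.log t
      = a ^ (k+1) * Real.log a / (k+1) - a ^ (k+1) / ((k+1)^2) := by
  obtain ⟨k, rfl⟩ : ∃ k', k = k' + 1 := ⟨k - 1, by omega⟩
  set F : ℝ → ℝ := fun t => t ^ (k+1) * (t * Real.log t) / (k+2) - t ^ (k+2) / ((k+2)^2) with hF
  have hcont : ContinuousOn F (Set.Icc 0 a) :=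
    (((continuous_pow (k+1)).mul Real.continuous_mul_log).div_const _ |>.sub
      ((continuous_pow (k+2)).div_const _)).continuousOn
  have hderiv : ∀ t ∈ Set.Ioo (0:ℝ) a, HasDerivAt F (t ^ (k+1) * Real.log t) t := by
    intro t ht
    have htne : t ≠ 0 := ne_of_gt ht.1
    have h1 : HasDerivAt (fun t : ℝ => t ^ (k+1) * (t * Real.log t))
        (((k:ℝ)+1) * t ^ k * (t * Real.log t) + t ^ (k+1) * (Real.log t + 1)) t := by
      have := (hasDerivAt_pow (k+1) t).mul (Real.hasDerivAt_mul_log htne)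
      simp at this; exact this
    have h2 : HasDerivAt F
        ((((k:ℝ)+1) * t ^ k * (t * Real.log t) + t ^ (k+1) * (Real.log t + 1)) / (k+2)
          - ((k:ℝ)+2) * t ^ (k+1) / ((k+2)^2)) t := by
      apply HasDerivAt.sub (h1.div_const _)
      have := (hasDerivAt_pow (k+2) t).div_const (((k:ℝ)+2)^2)
      simpa using this
    convert h2 using 1
    have hk2 : ((k:ℝ)+2) ≠ 0 := by positivity
    field_simp
    ring
  have hint : IntervalIntegrable (fun t : ℝ => t ^ (k+1) * Real.log t) volume 0 a :=
    (cont_pow_log (k+1) (by omega)).intervalIntegrable 0 a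
  rw [intervalIntegral.integral_eq_sub_of_hasDerivAt_of_le ha hcont hderiv hint]
  have : F 0 = 0 := by simp [hF]
  rw [this, hF]
  have : a ^ (k+1) * a = a ^ (k+2) := by ring
  push_cast
  ring_nf
  try rw [this]
  try ring_nf

lemma int1 (j : ℕ) {a : ℝ} : ∫ t in (0:ℝ)..a, (a - t) ^ j = a ^ (j+1) / (j+1) := by
  rw [intervalIntegral.integral_comp_sub_left (fun u => u ^ j) a]
  simp [integral_pow]

lemma int2 (j : ℕ) {a : ℝ} (ha : 0 ≤ a) :
    ∫ t in (0:ℝ)..a, ((a - t) ^ (j+1) * Real.log (a - t))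
      = a ^ (j+2) * Real.log a / (j+2) - a ^ (j+2) / ((j+2)^2) := by
  rw [intervalIntegral.integral_comp_sub_left (fun u => u ^ (j+1) * Real.log u) a]
  simp only [sub_self, sub_zero]
  rw [int_pow_log (j+1) (by omega) ha]
  push_cast; ring_nf

lemma int3 (j : ℕ) {a : ℝ} (ha : 0 ≤ a) :
    ∫ t in (0:ℝ)..a, ((a - t) ^ j * (t * Real.log t))
      = a ^ (j+2) * (Aa j 2 * Real.log a - Bb j 2) := by
  have hexp : ∀ t : ℝ, (a - t) ^ j * (t * Real.log t)
      = ∑ i ∈ Finset.range (j+1),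
          ((j.choose i : ℝ) * (-1)^i * a^(j-i)) * (t^(i+1) * Real.log t) := by
    intro t
    rw [show a - t = -t + a from by ring, add_pow, Finset.sum_mul]
    apply Finset.sum_congr rfl
    intro i _
    rw [neg_pow]
    ring
  simp only [hexp]
  rw [intervalIntegral.integral_finset_sum]
  · have heach : ∀ i ∈ Finset.range (j+1),
        (∫ t in (0:ℝ)..a, ((j.choose i : ℝ) * (-1)^i * a^(j-i)) * (t^(i+1) * Real.log t))
        = a ^ (j+2) * ((j.choose i : ℝ) * (-1)^i / ((i:ℝ)+2) * Real.log a
            - (j.choose i : ℝ) * (-1)^i / (((i:ℝ)+2)^2)) := by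
      intro i hi
      have hij : i ≤ j := by
        have := Finset.mem_range.mp hi; omega
      rw [intervalIntegral.integral_const_mul, int_pow_log (i+1) (by omega) ha]
      have hpow : a^(j-i) * a^(i+2) = a^(j+2) := by
        rw [← pow_add]; congr 1; omega
      have : ((j.choose i : ℝ) * (-1)^i * a^(j-i)) *
          (a ^ (i+1+1) * Real.log a / ((i:ℕ)+1+1) - a ^ (i+1+1) / ((((i:ℕ)+1+1):ℝ)^2))
          = (a^(j-i) * a^(i+2)) * ((j.choose i : ℝ) * (-1)^i / ((i:ℝ)+2) * Real.log a
            - (j.choose i : ℝ) * (-1)^i / (((i:ℝ)+2)^2)) := by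
        push_cast
        rw [show i+1+1 = i+2 from by omega]
        have h2 : ((i:ℝ)+2) ≠ 0 := by positivity
        field_simp
        ring
      push_cast at this ⊢
      rw [this, hpow]
    rw [Finset.sum_congr rfl heach, ← Finset.mul_sum]
    congr 1
    rw [Finset.sum_sub_distrib, ← Finset.sum_mul]
    unfold Aa Bb
    push_cast
    ring
  · intro i _
    apply Continuous.intervalIntegrable
    have : Continuous (fun t : ℝ => t^(i+1) * Real.log t) := cont_pow_log (i+1) (by omega)
    exact (continuous_const.mul this)

def Sx (m : ℕ) (c : ℝ) : Set (Fin m → ℝ) := {x | (∀ i, 0 ≤ x i) ∧ ∑ i, x i ≤ c}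

lemma cont_sumx (m : ℕ) : Continuous (fun x : Fin m → ℝ => ∑ i, x i) :=
  continuous_finset_sum _ (fun i _ => continuous_apply i)

lemma isClosed_Sx (m : ℕ) (c : ℝ) : IsClosed (Sx m c) := by
  have h1 : IsClosed {x : Fin m → ℝ | ∀ i, 0 ≤ x i} := by
    have : {x : Fin m → ℝ | ∀ i, 0 ≤ x i} = ⋂ i, {x | 0 ≤ x i} := by
      ext x; simp
    rw [this]
    exact isClosed_iInter (fun i => isClosed_le continuous_const (continuous_apply i))
  have h2 : IsClosed {x : Fin m → ℝ | ∑ i, x i ≤ c} :=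
    isClosed_le (cont_sumx m) continuous_const
  exact h1.inter h2

lemma measurableSet_Sx (m : ℕ) (c : ℝ) : MeasurableSet (Sx m c) :=
  (isClosed_Sx m c).measurableSet

lemma isCompact_Sx (m : ℕ) (c : ℝ) (hc : 0 ≤ c) : IsCompact (Sx m c) := by
  have hsub : Sx m c ⊆ Set.pi Set.univ (fun _ : Fin m => Set.Icc 0 c) := by
    intro x hx
    intro i _
    refine ⟨hx.1 i, ?_⟩
    calc x i ≤ ∑ k, x k := Finset.single_le_sum (fun k _ => hx.1 k) (Finset.mem_univ i)
    _ ≤ c := hx.2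
  exact (isCompact_univ_pi (fun _ => isCompact_Icc)).of_isClosed_subset (isClosed_Sx m c) hsub

lemma contP (m j : ℕ) (c : ℝ) : Continuous (fun x : Fin m → ℝ => (c - ∑ i, x i) ^ j) :=
  (continuous_const.sub (cont_sumx m)).pow j

lemma contG (m j : ℕ) (c : ℝ) :
    Continuous (fun x : Fin m → ℝ => (c - ∑ i, x i) ^ (j+1) * Real.log (c - ∑ i, x i)) := by
  have : (fun x : Fin m → ℝ => (c - ∑ i, x i) ^ (j+1) * Real.log (c - ∑ i, x i))
      = fun x : Fin m → ℝ => (c - ∑ i, x i) ^ j * ((c - ∑ i, x i) * Real.log (c - ∑ i, x i)) := by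
    funext x; ring
  rw [this]
  exact (contP m j c).mul (Real.continuous_mul_log.comp (continuous_const.sub (cont_sumx m)))

lemma contSL (m : ℕ) : Continuous (fun x : Fin m → ℝ => ∑ i, x i * Real.log (x i)) :=
  continuous_finset_sum _ (fun i _ => Real.continuous_mul_log.comp (continuous_apply i))

lemma contF (m j : ℕ) (c : ℝ) :
    Continuous (fun x : Fin m → ℝ => (c - ∑ i, x i) ^ j * ∑ i, x i * Real.log (x i)) :=
  (contP m j c).mul (contSL m)

lemma integrableOn_Sx {m : ℕ} {c : ℝ} (hc : 0 ≤ c) {f : (Fin m → ℝ) → ℝ} (hf : Continuous f) :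
    IntegrableOn f (Sx m c) := by
  exact hf.continuousOn.integrableOn_compact (isCompact_Sx m c hc)

lemma step (m : ℕ) (c : ℝ) (hc : 0 ≤ c) (f : (Fin (m+1) → ℝ) → ℝ) (hf : Continuous f) :
    ∫ x in Sx (m+1) c, f x
      = ∫ y in Sx m c, ∫ t in (0:ℝ)..(c - ∑ i, y i), f (Fin.cons t y) := by
  have hS1 := measurableSet_Sx (m+1) c
  have hint : Integrable ((Sx (m+1) c).indicator f) := by
    rw [integrable_indicator_iff hS1]
    exact integrableOn_Sx hc hf
  rw [← integral_indicator hS1]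
  have hmp := (volume_preserving_piFinSuccAbove (fun _ : Fin (m+1) => ℝ) 0).symm
  rw [← hmp.integral_comp (MeasurableEquiv.measurableEmbedding _) ((Sx (m+1) c).indicator f)]
  have hint2 : Integrable (fun z : ℝ × (Fin m → ℝ) =>
      (Sx (m+1) c).indicator f ((MeasurableEquiv.piFinSuccAbove (fun _ : Fin (m+1) => ℝ) 0).symm z)) := by
    exact (hmp.integrable_comp_emb (MeasurableEquiv.measurableEmbedding _)).mpr hint
  rw [show (volume : Measure (ℝ × (Fin m → ℝ))) = (volume : Measure ℝ).prod volume from rfl] at hint2 ⊢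
  rw [MeasureTheory.integral_prod_symm _ hint2]
  rw [← integral_indicator (measurableSet_Sx m c)]
  refine integral_congr_ae (Filter.Eventually.of_forall fun y => ?_)
  show _ = _
  simp only [MeasurableEquiv.piFinSuccAbove_symm_apply, Fin.insertNthEquiv, Equiv.coe_fn_mk,
    Fin.insertNth_zero']
  by_cases hy : y ∈ Sx m c
  · have ha : 0 ≤ c - ∑ i, y i := by
      have := hy.2; simp only [sub_nonneg]; exact this
    have hmem : ∀ t : ℝ, (Fin.cons t y ∈ Sx (m+1) c) ↔ t ∈ Set.Icc 0 (c - ∑ i, y i) := by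
      intro t
      constructor
      · rintro ⟨h1, h2⟩
        have ht0 : 0 ≤ t := by simpa using h1 0
        rw [Fin.sum_cons] at h2
        exact ⟨ht0, by linarith⟩
      · rintro ⟨ht0, ht1⟩
        refine ⟨?_, ?_⟩
        · intro i
          refine Fin.cases ?_ ?_ i
          · simpa using ht0
          · intro k; simpa using hy.1 k
        · rw [Fin.sum_cons]; linarith
    have hpt : ∀ t : ℝ, (Sx (m+1) c).indicator f (Fin.cons t y)
        = (Set.Icc (0:ℝ) (c - ∑ i, y i)).indicator (fun t => f (Fin.cons t y)) t := by
      intro t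
      by_cases ht : t ∈ Set.Icc (0:ℝ) (c - ∑ i, y i)
      · rw [Set.indicator_of_mem ht, Set.indicator_of_mem ((hmem t).mpr ht)]
      · rw [Set.indicator_of_notMem ht, Set.indicator_of_notMem (fun h => ht ((hmem t).mp h))]
    rw [show (∫ t : ℝ, (Sx (m+1) c).indicator f (Fin.cons t y))
        = ∫ t : ℝ, (Set.Icc (0:ℝ) (c - ∑ i, y i)).indicator (fun t => f (Fin.cons t y)) t
      from integral_congr_ae (Filter.Eventually.of_forall hpt)]
    rw [integral_indicator measurableSet_Icc, integral_Icc_eq_integral_Ioc,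
      ← intervalIntegral.integral_of_le ha, Set.indicator_of_mem hy]
  · rw [Set.indicator_of_notMem hy]
    have hpt : ∀ t : ℝ, (Sx (m+1) c).indicator f (Fin.cons t y) = 0 := by
      intro t
      apply Set.indicator_of_notMem
      intro h
      apply hy
      refine ⟨fun k => ?_, ?_⟩
      · have := h.1 k.succ; simpa using this
      · have h0 : 0 ≤ t := by simpa using h.1 0
        have h2 := h.2
        rw [Fin.sum_cons] at h2
        linarith
    rw [show (∫ t : ℝ, (Sx (m+1) c).indicator f (Fin.cons t y)) = ∫ t : ℝ, (0:ℝ)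
      from integral_congr_ae (Filter.Eventually.of_forall hpt)]
    simp

lemma master (m : ℕ) : ∀ (j : ℕ) (c : ℝ), 0 < c →
    ((∫ x in Sx m c, (c - ∑ i, x i) ^ j)
        = c^(m+j) * (j.factorial : ℝ) / ((m+j).factorial : ℝ))
    ∧ ((∫ x in Sx m c, (c - ∑ i, x i) ^ (j+1) * Real.log (c - ∑ i, x i))
        = c^(m+j+1) * ((j+1).factorial : ℝ) / ((m+j+1).factorial : ℝ)
            * (Real.log c - (Hn (m+j+1) - Hn (j+1))))
    ∧ ((∫ x in Sx m c, (c - ∑ i, x i) ^ j * ∑ i, x i * Real.log (x i))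
        = c^(m+j+1) * (j.factorial : ℝ) / ((m+j+1).factorial : ℝ)
            * (m * (Real.log c - Hn (m+j+1) + 1))) := by
  induction m with
  | zero =>
      intro j c hc
      have hS : Sx 0 c = Set.univ := by
        ext x
        simp [Sx, hc.le]
      have hvol : (volume : Measure (Fin 0 → ℝ)) Set.univ = 1 := by
        simp [volume_pi, Measure.pi_univ]
      have hsum0 : ∀ x : Fin 0 → ℝ, ∑ i, x i = 0 := fun x => by simp
      have hfac : ∀ n : ℕ, ((n.factorial : ℝ)) ≠ 0 :=
        fun n => Nat.cast_ne_zero.mpr (Nat.factorial_ne_zero n)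
      refine ⟨?_, ?_, ?_⟩
      · simp only [hS, hsum0, Measure.restrict_univ, sub_zero]
        rw [integral_const, measureReal_def, hvol]
        simp only [zero_add, ENNReal.toReal_one, one_smul, smul_eq_mul]
        field_simp
      · simp only [hS, hsum0, Measure.restrict_univ, sub_zero]
        rw [integral_const, measureReal_def, hvol]
        simp only [zero_add, ENNReal.toReal_one, one_smul, smul_eq_mul, sub_self, sub_zero]
        field_simp
      · simp only [hS, hsum0, Measure.restrict_univ, sub_zero]
        simp
  | succ m IH =>
      intro j c hc
      have hfac : ∀ n : ℕ, ((n.factorial : ℝ)) ≠ 0 :=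
        fun n => Nat.cast_ne_zero.mpr (Nat.factorial_ne_zero n)
      refine ⟨?_, ?_, ?_⟩
      · rw [step m c hc.le _ (contP (m+1) j c)]
        have hEq : Set.EqOn
            (fun y : Fin m → ℝ => ∫ t in (0:ℝ)..(c - ∑ i, y i), (c - ∑ i, Fin.cons t y i) ^ j)
            (fun y : Fin m → ℝ => (c - ∑ i, y i) ^ (j+1) / ((j:ℝ)+1)) (Sx m c) := by
          intro y hy
          simp only [Fin.sum_cons]
          have hrw : ∀ t : ℝ, c - (t + ∑ i, y i) = (c - ∑ i, y i) - t := fun t => by ring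
          simp_rw [hrw]
          rw [int1 j]
        rw [MeasureTheory.setIntegral_congr_fun (measurableSet_Sx m c) hEq]
        rw [integral_div]
        rw [(IH (j+1) c hc).1]
        rw [show m + (j+1) = m + j + 1 from by omega, show m+1+j = m+j+1 from by omega,
          Nat.factorial_succ j]
        have h1 : ((j:ℝ)) + 1 ≠ 0 := by positivity
        push_cast
        field_simp
      · rw [step m c hc.le _ (contG (m+1) j c)]
        have hEq : Set.EqOn
            (fun y : Fin m → ℝ => ∫ t in (0:ℝ)..(c - ∑ i, y i),
              (c - ∑ i, Fin.cons t y i) ^ (j+1) * Real.log (c - ∑ i, Fin.cons t y i))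
            (fun y : Fin m → ℝ =>
              (c - ∑ i, y i) ^ (j+1+1) * Real.log (c - ∑ i, y i) / ((j:ℝ)+2)
                - (c - ∑ i, y i) ^ (j+2) / (((j:ℝ)+2)^2)) (Sx m c) := by
          intro y hy
          have ha : (0:ℝ) ≤ c - ∑ i, y i := sub_nonneg.mpr hy.2
          simp only [Fin.sum_cons]
          have hrw : ∀ t : ℝ, c - (t + ∑ i, y i) = (c - ∑ i, y i) - t := fun t => by ring
          simp_rw [hrw]
          rw [int2 j ha]
        rw [MeasureTheory.setIntegral_congr_fun (measurableSet_Sx m c) hEq]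
        rw [integral_sub ((integrableOn_Sx hc.le (contG m (j+1) c)).div_const _)
          ((integrableOn_Sx hc.le (contP m (j+2) c)).div_const _)]
        rw [integral_div, integral_div]
        rw [(IH (j+1) c hc).2.1, (IH (j+2) c hc).1]
        rw [show m + (j+1) + 1 = m + j + 2 from by omega,
          show m + (j+2) = m + j + 2 from by omega,
          show m + 1 + j + 1 = m + j + 2 from by omega,
          show j + 1 + 1 = j + 2 from rfl,
          Nat.factorial_succ (j+1), Hn_succ (j+1)]
        have h1 : ((j:ℝ)) + 2 ≠ 0 := by positivity
        push_cast
        field_simp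
        ring
      · rw [step m c hc.le _ (contF (m+1) j c)]
        have hA : Aa j 2 = (j.factorial : ℝ) / (((j+2).factorial : ℕ) : ℝ) := by
          have h := Aa_eq j 1
          rw [show (1+1 : ℕ) = 2 from rfl, show j + 1 + 1 = j + 2 from rfl] at h
          simpa using h
        have hB : Bb j 2 = (j.factorial : ℝ) / (((j+2).factorial : ℕ) : ℝ) * (Hn (j+2) - 1) := by
          have h := Bb_eq j 1
          rw [show (1+1 : ℕ) = 2 from rfl, show j + 1 + 1 = j + 2 from rfl] at h
          simpa [Hn_one] using h
        have hEq : Set.EqOn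
            (fun y : Fin m → ℝ => ∫ t in (0:ℝ)..(c - ∑ i, y i),
              (c - ∑ i, Fin.cons t y i) ^ j
                * ∑ i, (Fin.cons t y : Fin (m+1) → ℝ) i * Real.log ((Fin.cons t y : Fin (m+1) → ℝ) i))
            (fun y : Fin m → ℝ =>
              (Aa j 2 * ((c - ∑ i, y i) ^ (j+1+1) * Real.log (c - ∑ i, y i))
                - Bb j 2 * ((c - ∑ i, y i) ^ (j+2)))
              + ((c - ∑ i, y i) ^ (j+1) * ∑ i, y i * Real.log (y i)) / ((j:ℝ)+1)) (Sx m c) := by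
          intro y hy
          have ha : (0:ℝ) ≤ c - ∑ i, y i := sub_nonneg.mpr hy.2
          simp only [Fin.sum_cons, Fin.sum_univ_succ, Fin.cons_zero, Fin.cons_succ]
          have hrw : ∀ t : ℝ,
              (c - (t + ∑ i, y i)) ^ j * (t * Real.log t + ∑ i, y i * Real.log (y i))
              = ((c - ∑ i, y i) - t) ^ j * (t * Real.log t)
                + ((c - ∑ i, y i) - t) ^ j * (∑ i, y i * Real.log (y i)) := by
            intro t; ring
          simp_rw [hrw]
          have hI1 : IntervalIntegrable (fun t : ℝ => (c - ∑ i, y i - t) ^ j * (t * Real.log t))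
              volume 0 (c - ∑ i, y i) := by
            apply Continuous.intervalIntegrable
            exact Continuous.mul (by fun_prop) Real.continuous_mul_log
          have hI2 : IntervalIntegrable
              (fun t : ℝ => (c - ∑ i, y i - t) ^ j * ∑ i, y i * Real.log (y i))
              volume 0 (c - ∑ i, y i) := by
            apply Continuous.intervalIntegrable
            fun_prop
          rw [intervalIntegral.integral_add hI1 hI2]
          rw [int3 j ha, intervalIntegral.integral_mul_const, int1 j]
          push_cast
          ring
        rw [MeasureTheory.setIntegral_congr_fun (measurableSet_Sx m c) hEq]
        have ig : IntegrableOn (fun y : Fin m → ℝ =>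
            Aa j 2 * ((c - ∑ i, y i) ^ (j+1+1) * Real.log (c - ∑ i, y i))) (Sx m c) volume :=
          (integrableOn_Sx hc.le (contG m (j+1) c)).const_mul _
        have ip : IntegrableOn (fun y : Fin m → ℝ =>
            Bb j 2 * ((c - ∑ i, y i) ^ (j+2))) (Sx m c) volume :=
          (integrableOn_Sx hc.le (contP m (j+2) c)).const_mul _
        have ib : IntegrableOn (fun y : Fin m → ℝ =>
            ((c - ∑ i, y i) ^ (j+1) * ∑ i, y i * Real.log (y i)) / ((j:ℝ)+1)) (Sx m c) volume :=
          (integrableOn_Sx hc.le (contF m (j+1) c)).div_const _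
        have isub : IntegrableOn (fun y : Fin m → ℝ =>
            Aa j 2 * ((c - ∑ i, y i) ^ (j+1+1) * Real.log (c - ∑ i, y i))
              - Bb j 2 * ((c - ∑ i, y i) ^ (j+2))) (Sx m c) volume := ig.sub ip
        rw [integral_add isub ib]
        rw [integral_sub ig ip]
        rw [integral_const_mul, integral_const_mul, integral_div]
        rw [(IH (j+1) c hc).2.1, (IH (j+2) c hc).1, (IH (j+1) c hc).2.2]
        rw [hA, hB]
        rw [show m + (j+1) + 1 = m + j + 2 from by omega,
          show m + (j+2) = m + j + 2 from by omega,
          show m + 1 + j + 1 = m + j + 2 from by omega,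
          show j + 1 + 1 = j + 2 from rfl,
          Nat.factorial_succ (j+1), Nat.factorial_succ j, Hn_succ (j+1)]
        have h1 : ((j:ℝ)) + 1 ≠ 0 := by positivity
        have h2 : ((j:ℝ)) + 2 ≠ 0 := by positivity
        push_cast
        field_simp
        ring

theorem stmt_9 (m : ℕ) (hm : 0 < m) (r : ℝ) (hr : 1 ≤ r) :
    ∫ x in {x : Fin m → ℝ | (∀ i, 0 ≤ x i) ∧ ∑ i, x i ≤ 1},
        (2 * (∑ i, x i) * Real.log r -
          ((∑ i, x i * Real.log (x i)) + (1 - ∑ i, x i) * Real.log (1 - ∑ i, x i))) =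
      2 * m * Real.log r / (Nat.factorial (m + 1) : ℝ) +
        (1 / (Nat.factorial m : ℝ)) * ∑ k ∈ Finset.Icc 2 (m + 1), (1 : ℝ) / k := by
  have h01 : (0:ℝ) ≤ 1 := zero_le_one
  have hfac : ∀ n : ℕ, ((n.factorial : ℝ)) ≠ 0 :=
    fun n => Nat.cast_ne_zero.mpr (Nat.factorial_ne_zero n)
  have i1 : IntegrableOn (fun x : Fin m → ℝ => 2 * (∑ i, x i) * Real.log r) (Sx m 1) volume := by
    apply integrableOn_Sx h01; fun_prop
  have i2 : IntegrableOn (fun x : Fin m → ℝ => ∑ i, x i * Real.log (x i)) (Sx m 1) volume :=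
    integrableOn_Sx h01 (contSL m)
  have i3 : IntegrableOn
      (fun x : Fin m → ℝ => (1 - ∑ i, x i) * Real.log (1 - ∑ i, x i)) (Sx m 1) volume := by
    have := integrableOn_Sx h01 (contG m 0 (1:ℝ))
    simpa using this
  show (∫ x in Sx m 1,
        (2 * (∑ i, x i) * Real.log r -
          ((∑ i, x i * Real.log (x i)) + (1 - ∑ i, x i) * Real.log (1 - ∑ i, x i)))) = _
  have iadd : IntegrableOn (fun x : Fin m → ℝ =>
      (∑ i, x i * Real.log (x i)) + (1 - ∑ i, x i) * Real.log (1 - ∑ i, x i)) (Sx m 1) volume :=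
    i2.add i3
  rw [integral_sub i1 iadd, integral_add i2 i3]
  have e1 : ∫ x in Sx m 1, 2 * (∑ i, x i) * Real.log r
      = (2 * Real.log r) * ∫ x in Sx m 1, (∑ i, x i) := by
    rw [← integral_const_mul]
    congr 1; funext x; ring
  have hP0 := (master m 0 1 one_pos).1
  have hP1 := (master m 1 1 one_pos).1
  have hF := (master m 0 1 one_pos).2.2
  have hG := (master m 0 1 one_pos).2.1
  simp only [pow_zero, pow_one, one_mul, one_pow, Real.log_one, Nat.add_zero,
    Nat.factorial_zero, Nat.factorial_one, Nat.cast_one, zero_add, Nat.zero_add] at hP0 hP1 hF hG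
  have hs : (∫ x in Sx m 1, (∑ i, x i)) = 1/(m.factorial:ℝ) - 1/((m+1).factorial:ℝ) := by
    have isub2 : IntegrableOn (fun x : Fin m → ℝ => (1:ℝ) - ∑ i, x i) (Sx m 1) volume := by
      apply integrableOn_Sx h01; fun_prop
    have hsub : (∫ x in Sx m 1, ((1:ℝ) - (1 - ∑ i, x i)))
        = (∫ x in Sx m 1, (1:ℝ)) - ∫ x in Sx m 1, ((1:ℝ) - ∑ i, x i) :=
      integral_sub (integrableOn_Sx h01 continuous_const) isub2
    simp only [sub_sub_cancel] at hsub
    rw [hsub, hP0, hP1]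
  rw [e1, hs, hF, hG]
  have hHn : Hn (m+1) = 1 + ∑ k ∈ Finset.Icc 2 (m+1), (1:ℝ)/k := by
    unfold Hn
    rw [← Finset.insert_Icc_add_one_left_eq_Icc (by omega : 1 ≤ m+1), Finset.sum_insert (by simp)]
    norm_num
  rw [hHn, Hn_one]
  have h1 : ((m.factorial : ℝ)) ≠ 0 := hfac m
  have h2 : (((m+1).factorial : ℝ)) ≠ 0 := hfac (m+1)
  rw [Nat.factorial_succ m]
  push_cast
  simp only [one_div]
  field_simp
  ring
end

section
/- Let r > 0 and define Υ(α) = ∫_{x ∈ ℝ_{≥0}^m, ∑ x_i ≤ α} E_r(x) dx for α ∈ (0,1], where E_r(x) = 2(∑ x_i) log r − [∑ x_i log x_i + (1 − ∑ x_i) log(1 − ∑ x_i)]. Then Υ is differentiable on (0,1) with Υ'(α) = (α^{m−1}/(m−1)!)·{(2 log r + ∑_{k=2}^m 1/k)·α − [α·log α + (1−α)·log(1−α)]}, where ∑_{k=2}^m 1/k = 0 when m = 1. -/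
open MeasureTheory Set
open scoped NNReal ENNReal

namespace Stmt19



def S (m : ℕ) (a : ℝ) : Set (Fin m → ℝ) := {x | (∀ i, 0 ≤ x i) ∧ ∑ i, x i ≤ a}

lemma measurableSet_S (m : ℕ) (a : ℝ) : MeasurableSet (S m a) := by
  have : S m a = (⋂ i, {x : Fin m → ℝ | 0 ≤ x i}) ∩ {x | ∑ i, x i ≤ a} := by
    ext x; simp [S]
  rw [this]
  exact (MeasurableSet.iInter fun i =>
    measurableSet_le measurable_const (measurable_pi_apply i)).inter
    (measurableSet_le (Finset.measurable_sum _ fun i _ => measurable_pi_apply i) measurable_const)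

lemma S_eq_empty {m : ℕ} {a : ℝ} (ha : a < 0) : S m a = ∅ := by
  ext x
  simp only [S, mem_setOf_eq, mem_empty_iff_false, iff_false, not_and, not_le]
  intro h
  exact lt_of_lt_of_le ha (Finset.sum_nonneg fun i _ => h i)

lemma volume_S (m : ℕ) (a : ℝ) :
    volume (S m a) = if 0 ≤ a then ENNReal.ofReal (a ^ m / (Nat.factorial m : ℝ)) else 0 := by
  induction m generalizing a with
  | zero =>
    by_cases ha : 0 ≤ a
    · have h1 : S 0 a = univ := by
        ext x; simp [S, Finset.univ_eq_empty, ha]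
      rw [h1]
      simp [ha, volume_pi, Measure.pi_univ]
    · rw [S_eq_empty (lt_of_not_ge ha)]
      simp [ha]
  | succ n ih =>
    have hmp := volume_preserving_piFinSuccAbove (fun _ : Fin (n+1) => ℝ) 0
    have key : S (n+1) a =
        (MeasurableEquiv.piFinSuccAbove (fun _ : Fin (n+1) => ℝ) 0) ⁻¹'
          {p : ℝ × (Fin n → ℝ) | 0 ≤ p.1 ∧ p.2 ∈ S n (a - p.1)} := by
      ext x
      simp only [S, mem_setOf_eq, mem_preimage, MeasurableEquiv.piFinSuccAbove_apply,
        Fin.insertNthEquiv, Equiv.coe_fn_symm_mk, Fin.removeNth, Fin.succAbove_zero]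
      rw [Fin.sum_univ_succ x]
      constructor
      · rintro ⟨h0, hs⟩
        exact ⟨h0 0, fun j => h0 _, by simpa [Fin.succAbove_zero] using by linarith⟩
      · rintro ⟨h0, h1, hs⟩
        refine ⟨fun i => ?_, by linarith⟩
        rcases Fin.eq_zero_or_eq_succ i with rfl | ⟨j, rfl⟩
        · exact h0
        · exact h1 j
    have hTmeas : MeasurableSet {p : ℝ × (Fin n → ℝ) | 0 ≤ p.1 ∧ p.2 ∈ S n (a - p.1)} := by
      have h2 : {p : ℝ × (Fin n → ℝ) | 0 ≤ p.1 ∧ p.2 ∈ S n (a - p.1)} =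
          {p : ℝ × (Fin n → ℝ) | 0 ≤ p.1} ∩
            ((⋂ i, {p : ℝ × (Fin n → ℝ) | 0 ≤ p.2 i}) ∩
              {p : ℝ × (Fin n → ℝ) | p.1 + ∑ i, p.2 i ≤ a}) := by
        ext p
        simp only [S, mem_setOf_eq, mem_inter_iff, mem_iInter]
        constructor
        · rintro ⟨h1, h2, h3⟩; exact ⟨h1, h2, by linarith⟩
        · rintro ⟨h1, h2, h3⟩; exact ⟨h1, h2, by linarith⟩
      rw [h2]
      refine (measurableSet_le measurable_const measurable_fst).inter
        ((MeasurableSet.iInter fun i => measurableSet_le measurable_const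
          ((measurable_pi_apply i).comp measurable_snd)).inter
          (measurableSet_le (measurable_fst.add
            (Finset.measurable_sum _ fun i _ => (measurable_pi_apply i).comp measurable_snd))
            measurable_const))
    rw [key, hmp.measure_preimage hTmeas.nullMeasurableSet]
    rw [Measure.volume_eq_prod, Measure.prod_apply hTmeas]
    have slice : ∀ t : ℝ, volume (Prod.mk t ⁻¹' {p : ℝ × (Fin n → ℝ) | 0 ≤ p.1 ∧ p.2 ∈ S n (a - p.1)}) =
        (Icc (0:ℝ) a).indicator (fun t => ENNReal.ofReal ((a - t) ^ n / (Nat.factorial n : ℝ))) t := by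
      intro t
      by_cases ht : 0 ≤ t
      · have hpre : (Prod.mk t ⁻¹' {p : ℝ × (Fin n → ℝ) | 0 ≤ p.1 ∧ p.2 ∈ S n (a - p.1)}) = S n (a - t) := by
          ext y; simp [ht]
        rw [hpre, ih]
        by_cases hta : t ≤ a
        · rw [if_pos (by linarith), indicator_of_mem (mem_Icc.2 ⟨ht, hta⟩)]
        · rw [if_neg (by intro h; exact hta (by linarith)),
            indicator_of_notMem (by simp [mem_Icc]; intro _; linarith)]
      · have hpre : (Prod.mk t ⁻¹' {p : ℝ × (Fin n → ℝ) | 0 ≤ p.1 ∧ p.2 ∈ S n (a - p.1)}) = ∅ := by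
          ext y; simp [ht]
        rw [hpre, measure_empty, indicator_of_notMem (by simp [mem_Icc]; intro h; exact absurd h ht)]
    simp only [slice]
    rw [lintegral_indicator measurableSet_Icc]
    by_cases ha : 0 ≤ a
    · rw [if_pos ha]
      have hcont : Continuous fun t : ℝ => (a - t) ^ n / (Nat.factorial n : ℝ) := by fun_prop
      rw [← ofReal_integral_eq_lintegral_ofReal (hcont.integrableOn_Icc)
        (ae_restrict_of_forall_mem measurableSet_Icc (fun t ht => by
          exact div_nonneg (pow_nonneg (by linarith [(mem_Icc.1 ht).2]) n) (Nat.cast_nonneg _)))]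
      rw [MeasureTheory.integral_Icc_eq_integral_Ioc, ← intervalIntegral.integral_of_le ha]
      have h3 : ∫ t in (0:ℝ)..a, (a - t) ^ n / (Nat.factorial n : ℝ)
          = (∫ t in (0:ℝ)..a, (a - t) ^ n) / (Nat.factorial n : ℝ) := by
        rw [intervalIntegral.integral_div]
      rw [h3, intervalIntegral.integral_comp_sub_left (fun t => t ^ n) a]
      simp only [sub_self, sub_zero, integral_pow]
      rw [Nat.factorial_succ]
      congr 1
      push_cast
      field_simp
      simp
    · rw [if_neg ha]
      have : Icc (0:ℝ) a = ∅ := Icc_eq_empty (by intro h; exact ha (le_trans (le_refl 0) h))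
      rw [this]
      simp




lemma continuous_pow_mul_log (j : ℕ) : Continuous fun t : ℝ => t ^ (j+1) * Real.log t := by
  have h : (fun t : ℝ => t ^ (j+1) * Real.log t) = fun t : ℝ => t ^ j * (t * Real.log t) := by
    ext t; rw [pow_succ]; ring
  rw [h]
  exact (continuous_pow j).mul Real.continuous_mul_log

lemma integral_pow_mul_log (j : ℕ) {a : ℝ} (ha : 0 < a) :
    ∫ t in (0:ℝ)..a, t ^ (j+1) * Real.log t
      = a ^ (j+2) / (j+2) * Real.log a - a ^ (j+2) / ((j+2)*(j+2)) := by
  set k := j + 1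
  have hk2 : ((k:ℝ) + 1) ≠ 0 := by positivity
  set F : ℝ → ℝ := fun t => t ^ (k+1) * Real.log t / (k+1) - t ^ (k+1) / ((k+1)*(k+1)) with hF
  have hFc : Continuous F := by
    apply Continuous.sub
    · exact (continuous_pow_mul_log k).div_const _
    · exact (continuous_pow (k+1)).div_const _
  have hderiv : ∀ t ∈ Ioo (0:ℝ) a, HasDerivWithinAt F (t ^ k * Real.log t) (Ioi t) t := by
    intro t ht
    have ht0 : t ≠ 0 := ne_of_gt ht.1
    have h1 : HasDerivAt (fun t : ℝ => t ^ (k+1) * Real.log t / (k+1))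
        ((((k:ℝ)+1) * t ^ k * Real.log t + t ^ (k+1) * t⁻¹) / ((k:ℝ)+1)) t := by
      have := (((hasDerivAt_pow (k+1) t).mul (Real.hasDerivAt_log ht0)).div_const ((k:ℝ)+1))
      simpa using this
    have h2 : HasDerivAt (fun t : ℝ => t ^ (k+1) / (((k:ℝ)+1)*((k:ℝ)+1)))
        ((((k:ℝ)+1) * t ^ k) / (((k:ℝ)+1)*((k:ℝ)+1))) t := by
      have := ((hasDerivAt_pow (k+1) t).div_const (((k:ℝ)+1)*((k:ℝ)+1)))
      simpa using this
    have h3 := (h1.sub h2)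
    have heq : (((k:ℝ)+1) * t ^ k * Real.log t + t ^ (k+1) * t⁻¹) / ((k:ℝ)+1)
        - (((k:ℝ)+1) * t ^ k) / (((k:ℝ)+1)*((k:ℝ)+1)) = t ^ k * Real.log t := by
      rw [pow_succ]
      field_simp
      ring
    rw [heq] at h3
    exact h3.hasDerivWithinAt
  have hint : IntervalIntegrable (fun t : ℝ => t ^ k * Real.log t) volume 0 a :=
    (continuous_pow_mul_log j).intervalIntegrable 0 a
  have := intervalIntegral.integral_eq_sub_of_hasDeriv_right_of_le (le_of_lt ha)
    hFc.continuousOn hderiv hint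
  rw [this, hF]
  simp only [ne_eq, OfNat.ofNat_ne_zero, not_false_eq_true, zero_pow, Real.log_zero]
  have hz : (0:ℝ) ^ (k+1) = 0 := by simp
  rw [hz]
  show a ^ (k + 1) * Real.log a / (↑k + 1) - a ^ (k + 1) / ((↑k + 1) * (↑k + 1)) - (0 * 0 / (↑k + 1) - 0 / ((↑k + 1) * (↑k + 1)))
    = a ^ (j + 2) / (↑j + 2) * Real.log a - a ^ (j + 2) / ((↑j + 2) * (↑j + 2))
  have : k + 1 = j + 2 := rfl
  rw [this]
  push_cast
  simp only [k]
  push_cast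
  ring




section
open Finset
noncomputable def Hsum (k : ℕ) : ℝ := ∑ i ∈ Finset.Icc 1 k, (1:ℝ)/i

lemma Hsum_succ (k : ℕ) : Hsum (k+1) = Hsum k + 1/(k+1 : ℝ) := by
  rw [Hsum, Hsum, Finset.sum_Icc_succ_top (by omega : 1 ≤ k+1)]
  push_cast
  ring

lemma sum_choose_rec (n : ℕ) (g : ℕ → ℝ) :
    ∑ j ∈ Finset.range (n+2), (-1:ℝ)^j * ((n+1).choose j) * g j
      = ∑ j ∈ Finset.range (n+1), (-1:ℝ)^j * (n.choose j) * g j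
        - ∑ j ∈ Finset.range (n+1), (-1:ℝ)^j * (n.choose j) * g (j+1) := by
  rw [Finset.sum_range_succ' (fun j => (-1:ℝ)^j * ((n+1).choose j) * g j) (n+1)]
  have h1 : ∀ i, (-1:ℝ)^(i+1) * ((n+1).choose (i+1)) * g (i+1)
      = -((-1:ℝ)^i * (n.choose i) * g (i+1)) + (-1:ℝ)^(i+1) * (n.choose (i+1)) * g (i+1) := by
    intro i
    rw [Nat.choose_succ_succ]
    push_cast
    ring
  rw [Finset.sum_congr rfl (fun i _ => h1 i), Finset.sum_add_distrib, Finset.sum_neg_distrib]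
  have h2 : ∑ i ∈ Finset.range (n+1), (-1:ℝ)^(i+1) * (n.choose (i+1)) * g (i+1)
      = ∑ j ∈ Finset.range (n+1), (-1:ℝ)^j * (n.choose j) * g j - g 0 := by
    rw [Finset.sum_range_succ' (fun j => (-1:ℝ)^j * (n.choose j) * g j) n]
    rw [Finset.sum_range_succ]
    simp [Nat.choose_succ_self]
  rw [h2]
  simp
  ring

lemma idI (n : ℕ) : ∀ p : ℕ, 1 ≤ p →
    ∑ j ∈ Finset.range (n+1), (-1:ℝ)^j * (n.choose j) * (1/((j:ℝ) + p))
      = (n.factorial * (p-1).factorial : ℝ) / ((n+p).factorial : ℝ) := by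
  induction n with
  | zero =>
    intro p hp
    obtain ⟨q, rfl⟩ : ∃ q, p = q + 1 := ⟨p - 1, by omega⟩
    simp [Nat.factorial_succ]
    have : ((q+1:ℕ):ℝ) ≠ 0 := by positivity
    field_simp
  | succ n ih =>
    intro p hp
    rw [sum_choose_rec n (fun j => 1/((j:ℝ) + p))]
    have h1 : ∑ j ∈ Finset.range (n+1), (-1:ℝ)^j * (n.choose j) * (1/(((j+1:ℕ):ℝ) + p))
        = ∑ j ∈ Finset.range (n+1), (-1:ℝ)^j * (n.choose j) * (1/((j:ℝ) + (p+1:ℕ))) := by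
      apply Finset.sum_congr rfl
      intro j _
      push_cast
      ring_nf
    rw [h1, ih p hp, ih (p+1) (by omega)]
    obtain ⟨q, rfl⟩ : ∃ q, p = q + 1 := ⟨p - 1, by omega⟩
    have e1 : n + 1 + (q + 1) = (n + (q+1)) + 1 := by ring
    have e2 : (q + 1 + 1) - 1 = q + 1 := by omega
    have e3 : (q + 1) - 1 = q := by omega
    have e4 : n + (q + 1 + 1) = (n + (q+1)) + 1 := by ring
    rw [e1, e2, e3, e4, Nat.factorial_succ (n + (q+1)), Nat.factorial_succ n, Nat.factorial_succ q]
    have f1 : ((n + (q+1)).factorial : ℝ) ≠ 0 := by positivity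
    have f2 : ((n : ℝ) + (q+1) + 1) ≠ 0 := by positivity
    push_cast
    field_simp
    ring

lemma idII (n : ℕ) : ∀ p : ℕ, 1 ≤ p →
    ∑ j ∈ Finset.range (n+1), (-1:ℝ)^j * (n.choose j) * (1/(((j:ℝ) + p)*((j:ℝ) + p)))
      = (n.factorial * (p-1).factorial : ℝ) / ((n+p).factorial : ℝ) * (Hsum (n+p) - Hsum (p-1)) := by
  induction n with
  | zero =>
    intro p hp
    obtain ⟨q, rfl⟩ : ∃ q, p = q + 1 := ⟨p - 1, by omega⟩
    simp [Nat.factorial_succ, Hsum_succ]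
    have : ((q+1:ℕ):ℝ) ≠ 0 := by positivity
    field_simp
    simp
  | succ n ih =>
    intro p hp
    rw [sum_choose_rec n (fun j => 1/(((j:ℝ) + p)*((j:ℝ) + p)))]
    have h1 : ∑ j ∈ Finset.range (n+1), (-1:ℝ)^j * (n.choose j) * (1/((((j+1:ℕ):ℝ) + p)*(((j+1:ℕ):ℝ) + p)))
        = ∑ j ∈ Finset.range (n+1), (-1:ℝ)^j * (n.choose j) * (1/(((j:ℝ) + (p+1:ℕ))*((j:ℝ) + (p+1:ℕ)))) := by
      apply Finset.sum_congr rfl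
      intro j _
      push_cast
      ring_nf
    rw [h1, ih p hp, ih (p+1) (by omega)]
    obtain ⟨q, rfl⟩ : ∃ q, p = q + 1 := ⟨p - 1, by omega⟩
    have e1 : n + 1 + (q + 1) = (n + (q+1)) + 1 := by ring
    have e2 : (q + 1 + 1) - 1 = q + 1 := by omega
    have e3 : (q + 1) - 1 = q := by omega
    have e4 : n + (q + 1 + 1) = (n + (q+1)) + 1 := by ring
    rw [e1, e2, e3, e4, Hsum_succ (n + (q+1)), Hsum_succ q,
      Nat.factorial_succ (n + (q+1)), Nat.factorial_succ n, Nat.factorial_succ q]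
    have f1 : ((n + (q+1)).factorial : ℝ) ≠ 0 := by positivity
    have f2 : ((n : ℝ) + (q+1) + 1) ≠ 0 := by positivity
    have f3 : ((q:ℝ) + 1) ≠ 0 := by positivity
    have f4 : ((q.factorial : ℝ)) ≠ 0 := by positivity
    have f5 : ((n.factorial : ℝ)) ≠ 0 := by positivity
    push_cast
    field_simp
    ring




-- placeholders from previous parts

lemma Hsum_one : Hsum 1 = 1 := by rw [Hsum]; simp

lemma conv_eval (n : ℕ) {a : ℝ} (ha : 0 < a) :
    ∫ t in (0:ℝ)..a, (t * Real.log t) * ((a - t)^n / (n.factorial : ℝ))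
      = a^(n+2) / ((n+2).factorial : ℝ) * (Real.log a - (Hsum (n+2) - 1)) := by
  have hexp : ∀ t : ℝ, (t * Real.log t) * ((a - t)^n / (n.factorial : ℝ))
      = ∑ j ∈ range (n+1), ((-1:ℝ)^j * (n.choose j) * a^(n-j) / (n.factorial : ℝ))
          * (t^(j+1) * Real.log t) := by
    intro t
    rw [show a - t = -t + a by ring, add_pow, Finset.sum_div, Finset.mul_sum]
    apply Finset.sum_congr rfl
    intro j hj
    rw [neg_pow]
    ring
  rw [intervalIntegral.integral_congr (fun t _ => hexp t)]
  rw [intervalIntegral.integral_finset_sum (f := fun j t => ((-1:ℝ)^j * (n.choose j) * a^(n-j) / (n.factorial : ℝ))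
      * (t^(j+1) * Real.log t)) (fun j _ =>
    ((continuous_const.mul (continuous_pow_mul_log j)).intervalIntegrable 0 a))]
  have hterm : ∀ j ∈ range (n+1),
      ∫ t in (0:ℝ)..a, ((-1:ℝ)^j * (n.choose j) * a^(n-j) / (n.factorial : ℝ))
          * (t^(j+1) * Real.log t)
      = (a^(n+2) * Real.log a / (n.factorial : ℝ)) * ((-1:ℝ)^j * (n.choose j) * (1/((j:ℝ)+2)))
        - (a^(n+2) / (n.factorial : ℝ)) * ((-1:ℝ)^j * (n.choose j) * (1/(((j:ℝ)+2)*((j:ℝ)+2)))) := by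
    intro j hj
    rw [intervalIntegral.integral_const_mul, integral_pow_mul_log j ha]
    have hpow : a^(n-j) * a^(j+2) = a^(n+2) := by
      rw [← pow_add]
      congr 1
      have := Finset.mem_range.1 hj
      omega
    rw [← hpow]
    ring
  rw [Finset.sum_congr rfl hterm, Finset.sum_sub_distrib, ← Finset.mul_sum, ← Finset.mul_sum]
  have i1 := idI n 2 (by norm_num)
  have i2 := idII n 2 (by norm_num)
  norm_num at i1 i2
  simp only [one_div, mul_inv] 
  rw [i1, i2, Hsum_one]
  have f1 : ((n.factorial : ℝ)) ≠ 0 := by positivity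
  have f2 : (((n+2).factorial : ℝ)) ≠ 0 := by positivity
  field_simp





end

lemma lint_pow (n : ℕ) (c : ℝ) :
    ∫⁻ t in Ioc (0:ℝ) c, ENNReal.ofReal (t^n / (n.factorial : ℝ))
      = if 0 ≤ c then ENNReal.ofReal (c^(n+1) / ((n+1).factorial : ℝ)) else 0 := by
  by_cases hc : 0 ≤ c
  · rw [if_pos hc]
    have hcont : Continuous fun t : ℝ => t^n / (n.factorial : ℝ) := by fun_prop
    rw [← ofReal_integral_eq_lintegral_ofReal
      (hcont.integrableOn_Icc.mono_set Ioc_subset_Icc_self)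
      (ae_restrict_of_forall_mem measurableSet_Ioc (fun t ht =>
        div_nonneg (pow_nonneg (le_of_lt ht.1) n) (Nat.cast_nonneg _)))]
    rw [← intervalIntegral.integral_of_le hc, intervalIntegral.integral_div, integral_pow]
    congr 1
    rw [Nat.factorial_succ]
    push_cast
    field_simp
    simp
  · rw [if_neg hc, Ioc_eq_empty (by intro h; exact hc (le_of_lt h))]
    simp

lemma lint_pow' (n : ℕ) {a c : ℝ} (hc : c ≤ a) :
    ∫⁻ t in Ioc (0:ℝ) c, ENNReal.ofReal ((a - t)^n / (n.factorial : ℝ))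
      = if 0 ≤ c then ENNReal.ofReal ((a^(n+1) - (a - c)^(n+1)) / ((n+1).factorial : ℝ)) else 0 := by
  by_cases h : 0 ≤ c
  · rw [if_pos h]
    have hcont : Continuous fun t : ℝ => (a - t)^n / (n.factorial : ℝ) := by fun_prop
    rw [← ofReal_integral_eq_lintegral_ofReal
      (hcont.integrableOn_Icc.mono_set Ioc_subset_Icc_self)
      (ae_restrict_of_forall_mem measurableSet_Ioc (fun t ht =>
        div_nonneg (pow_nonneg (by linarith [ht.2]) n) (Nat.cast_nonneg _)))]
    rw [← intervalIntegral.integral_of_le h, intervalIntegral.integral_div,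
      intervalIntegral.integral_comp_sub_left (fun t => t ^ n) a]
    rw [integral_pow]
    congr 1
    rw [Nat.factorial_succ]
    push_cast
    field_simp
    simp
  · rw [if_neg h, Ioc_eq_empty (by intro hh; exact h (le_of_lt hh))]
    simp

lemma S_finite (m : ℕ) (a : ℝ) : IsFiniteMeasure (volume.restrict (S m a)) := by
  constructor
  rw [Measure.restrict_apply_univ, volume_S]
  split <;> simp [ENNReal.ofReal_lt_top]

/-- Pushforward of the restricted volume under the sum map. -/
lemma map_sum (n : ℕ) {a : ℝ} (ha : 0 ≤ a) :
    Measure.map (fun x : Fin (n+1) → ℝ => ∑ i, x i) (volume.restrict (S (n+1) a))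
      = (volume.restrict (Ioc 0 a)).withDensity
          (fun t => ENNReal.ofReal (t^n / (n.factorial : ℝ))) := by
  haveI := S_finite (n+1) a
  haveI : IsFiniteMeasure (Measure.map (fun x : Fin (n+1) → ℝ => ∑ i, x i)
      (volume.restrict (S (n+1) a))) :=
    Measure.isFiniteMeasure_map _ _
  have hsum : Measurable fun x : Fin (n+1) → ℝ => ∑ i, x i :=
    Finset.measurable_sum _ fun i _ => measurable_pi_apply i
  have hd : Measurable fun t : ℝ => ENNReal.ofReal (t^n / (n.factorial : ℝ)) := by
    apply Measurable.ennreal_ofReal; fun_prop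
  apply Measure.ext_of_Iic
  intro b
  rw [Measure.map_apply hsum measurableSet_Iic,
    Measure.restrict_apply (hsum measurableSet_Iic)]
  have hset : ((fun x : Fin (n+1) → ℝ => ∑ i, x i) ⁻¹' Iic b) ∩ S (n+1) a
      = S (n+1) (min a b) := by
    ext x
    simp only [S, mem_inter_iff, mem_preimage, mem_Iic, mem_setOf_eq, le_min_iff]
    tauto
  rw [hset, volume_S, withDensity_apply _ measurableSet_Iic,
    Measure.restrict_restrict measurableSet_Iic]
  rw [Set.inter_comm, Set.Ioc_inter_Iic, lint_pow n (a ⊓ b)]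




lemma volume_S_inter_ge (n : ℕ) (i : Fin (n+1)) {a b : ℝ} (hb : 0 ≤ b) :
    volume (S (n+1) a ∩ {x : Fin (n+1) → ℝ | b ≤ x i}) = volume (S (n+1) (a - b)) := by
  set c : Fin (n+1) → ℝ := fun j => if j = i then b else 0 with hc
  have hsumc : ∑ j, c j = b := by
    rw [hc]
    simp [Finset.sum_ite_eq]
  have hset : (fun h : Fin (n+1) → ℝ => c + h) ⁻¹' (S (n+1) a ∩ {x | b ≤ x i})
      = S (n+1) (a - b) := by
    ext h
    simp only [S, mem_preimage, mem_inter_iff, mem_setOf_eq, Pi.add_apply]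
    constructor
    · rintro ⟨⟨h0, hs⟩, hi⟩
      refine ⟨fun j => ?_, ?_⟩
      · by_cases hji : j = i
        · subst hji
          simpa [hc] using hi
        · have := h0 j
          simpa [hc, hji] using this
      · rw [Finset.sum_add_distrib, hsumc] at hs
        linarith
    · rintro ⟨h0, hs⟩
      refine ⟨⟨fun j => ?_, ?_⟩, ?_⟩
      · by_cases hji : j = i
        · subst hji; simp [hc]; linarith [h0 j]
        · simpa [hc, hji] using h0 j
      · rw [Finset.sum_add_distrib, hsumc]
        linarith
      · simp [hc]
        linarith [h0 i]
  rw [← hset, measure_preimage_add]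

lemma volume_hyperplane (n : ℕ) (i : Fin (n+1)) (b : ℝ) :
    volume {x : Fin (n+1) → ℝ | x i = b} = 0 := by
  rw [volume_pi]
  exact Measure.pi_hyperplane (fun _ : Fin (n+1) => (volume : Measure ℝ)) i b

lemma volume_S_inter_gt (n : ℕ) (i : Fin (n+1)) {a b : ℝ} (hb : 0 ≤ b) :
    volume (S (n+1) a ∩ {x : Fin (n+1) → ℝ | b < x i}) = volume (S (n+1) (a - b)) := by
  rw [← volume_S_inter_ge n i hb]
  apply le_antisymm
  · exact measure_mono (inter_subset_inter_right _ (fun x (hx : b < x i) => (le_of_lt hx : b ≤ x i)))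
  · calc volume (S (n+1) a ∩ {x : Fin (n+1) → ℝ | b ≤ x i})
        ≤ volume ((S (n+1) a ∩ {x | b < x i}) ∪ {x : Fin (n+1) → ℝ | x i = b}) := by
          apply measure_mono
          rintro x ⟨hxS, (hxi : b ≤ x i)⟩
          rcases lt_or_eq_of_le hxi with h | h
          · exact Or.inl ⟨hxS, h⟩
          · exact Or.inr h.symm
      _ ≤ volume (S (n+1) a ∩ {x | b < x i}) + volume {x : Fin (n+1) → ℝ | x i = b} :=
          measure_union_le _ _
      _ = volume (S (n+1) a ∩ {x | b < x i}) := by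
          rw [volume_hyperplane]; simp

lemma volume_S_inter_le (n : ℕ) (i : Fin (n+1)) {a b : ℝ} (ha : 0 ≤ a) (hb : 0 ≤ b) :
    volume (S (n+1) a ∩ {x : Fin (n+1) → ℝ | x i ≤ b})
      = ENNReal.ofReal (a^(n+1) / ((n+1).factorial : ℝ))
        - volume (S (n+1) (a - b)) := by
  have hpart := measure_inter_add_diff (μ := volume) (S (n+1) a)
    (measurableSet_le (measurable_pi_apply i) measurable_const : MeasurableSet {x : Fin (n+1) → ℝ | x i ≤ b})
  have hdiff : S (n+1) a \ {x : Fin (n+1) → ℝ | x i ≤ b} = S (n+1) a ∩ {x | b < x i} := by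
    ext x; simp [Set.diff_eq, not_le, Set.mem_compl_iff]
  rw [hdiff, volume_S_inter_gt n i hb, volume_S (n+1) a, if_pos ha] at hpart
  have hfin : volume (S (n+1) (a - b)) ≠ ⊤ := by
    rw [volume_S]; split <;> simp
  exact ENNReal.eq_sub_of_add_eq hfin hpart



lemma volume_S' (n : ℕ) (c : ℝ) :
    volume (S (n+1) c) = ENNReal.ofReal ((max c 0)^(n+1) / ((n+1).factorial : ℝ)) := by
  rw [volume_S]
  rcases le_total 0 c with h | h
  · rw [if_pos h, max_eq_left h]
  · rcases lt_or_eq_of_le h with h' | h'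
    · rw [if_neg (not_le.2 h'), max_eq_right h]
      simp [zero_pow]
    · rw [← h']
      simp

lemma map_eval (n : ℕ) (i : Fin (n+1)) {a : ℝ} (ha : 0 ≤ a) :
    Measure.map (fun x : Fin (n+1) → ℝ => x i) (volume.restrict (S (n+1) a))
      = (volume.restrict (Ioc 0 a)).withDensity
          (fun t => ENNReal.ofReal ((a - t)^n / (n.factorial : ℝ))) := by
  haveI := S_finite (n+1) a
  haveI : IsFiniteMeasure (Measure.map (fun x : Fin (n+1) → ℝ => x i)
      (volume.restrict (S (n+1) a))) :=
    Measure.isFiniteMeasure_map _ _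
  apply Measure.ext_of_Iic
  intro b
  rw [Measure.map_apply (measurable_pi_apply i) measurableSet_Iic,
    Measure.restrict_apply ((measurable_pi_apply i) measurableSet_Iic),
    withDensity_apply _ measurableSet_Iic,
    Measure.restrict_restrict measurableSet_Iic, Set.inter_comm (Iic b),
    Set.Ioc_inter_Iic, lint_pow' n (min_le_left a b)]
  by_cases hb : 0 ≤ b
  · have hpre : ((fun x : Fin (n+1) → ℝ => x i) ⁻¹' Iic b) ∩ S (n+1) a
        = S (n+1) a ∩ {x | x i ≤ b} := by
      ext x; simp only [mem_inter_iff, mem_preimage, mem_Iic, mem_setOf_eq]; tauto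
    rw [hpre, volume_S_inter_le n i ha hb, volume_S', if_pos (le_min ha hb)]
    have hmax : a - a ⊓ b = max (a - b) 0 := by
      rcases le_total a b with h | h
      · rw [min_eq_left h, max_eq_right (by linarith)]; ring
      · rw [min_eq_right h, max_eq_left (by linarith)]
    rw [← hmax, sub_div, ENNReal.ofReal_sub _ (div_nonneg (pow_nonneg (by
      rcases le_total a b with h | h
      · rw [min_eq_left h]; linarith
      · rw [min_eq_right h]; linarith) _) (Nat.cast_nonneg _))]
  · have hpre : ((fun x : Fin (n+1) → ℝ => x i) ⁻¹' Iic b) ∩ S (n+1) a = ∅ := by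
      ext x
      simp only [mem_inter_iff, mem_preimage, mem_Iic, mem_empty_iff_false, iff_false, not_and]
      intro hxb hxS
      exact hb (le_trans (hxS.1 i) hxb)
    rw [hpre, if_neg (by intro h; exact hb (le_trans (le_min_iff.1 h).2 (le_refl b)))]
    simp



lemma integral_sum_comp (n : ℕ) {a : ℝ} (ha : 0 ≤ a) (F : ℝ → ℝ) (hF : Measurable F) :
    ∫ x in S (n+1) a, F (∑ i, x i)
      = ∫ t in (0:ℝ)..a, F t * (t^n / (n.factorial : ℝ)) := by
  have hsum : Measurable fun x : Fin (n+1) → ℝ => ∑ i, x i :=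
    Finset.measurable_sum _ fun i _ => measurable_pi_apply i
  have h1 : ∫ x in S (n+1) a, F (∑ i, x i)
      = ∫ y, F y ∂(Measure.map (fun x : Fin (n+1) → ℝ => ∑ i, x i)
          (volume.restrict (S (n+1) a))) :=
    (integral_map hsum.aemeasurable hF.aestronglyMeasurable).symm
  rw [h1, map_sum n ha]
  have hd : Measurable fun t : ℝ => Real.toNNReal (t^n / (n.factorial : ℝ)) := by
    apply Measurable.real_toNNReal; fun_prop
  have h2 : (fun t : ℝ => ENNReal.ofReal (t^n / (n.factorial : ℝ)))
      = fun t => ((Real.toNNReal (t^n / (n.factorial : ℝ)) : ℝ≥0) : ℝ≥0∞) := rfl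
  rw [h2, integral_withDensity_eq_integral_smul hd F]
  rw [← intervalIntegral.integral_of_le ha]
  rw [intervalIntegral.integral_of_le ha, intervalIntegral.integral_of_le ha]
  apply setIntegral_congr_fun measurableSet_Ioc
  intro t ht
  have htn : 0 ≤ t^n / (n.factorial : ℝ) :=
    div_nonneg (pow_nonneg (le_of_lt ht.1) n) (Nat.cast_nonneg _)
  simp only [NNReal.smul_def, Real.coe_toNNReal _ htn, smul_eq_mul]
  ring

lemma integral_eval_comp (n : ℕ) (i : Fin (n+1)) {a : ℝ} (ha : 0 ≤ a) (G : ℝ → ℝ)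
    (hG : Measurable G) :
    ∫ x in S (n+1) a, G (x i)
      = ∫ t in (0:ℝ)..a, G t * ((a - t)^n / (n.factorial : ℝ)) := by
  have h1 : ∫ x in S (n+1) a, G (x i)
      = ∫ y, G y ∂(Measure.map (fun x : Fin (n+1) → ℝ => x i)
          (volume.restrict (S (n+1) a))) :=
    (integral_map (measurable_pi_apply i).aemeasurable hG.aestronglyMeasurable).symm
  rw [h1, map_eval n i ha]
  have hd : Measurable fun t : ℝ => Real.toNNReal ((a - t)^n / (n.factorial : ℝ)) := by
    apply Measurable.real_toNNReal; fun_prop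
  have h2 : (fun t : ℝ => ENNReal.ofReal ((a - t)^n / (n.factorial : ℝ)))
      = fun t => ((Real.toNNReal ((a - t)^n / (n.factorial : ℝ)) : ℝ≥0) : ℝ≥0∞) := rfl
  rw [h2, integral_withDensity_eq_integral_smul hd G]
  rw [intervalIntegral.integral_of_le ha]
  apply setIntegral_congr_fun measurableSet_Ioc
  intro t ht
  have htn : 0 ≤ (a - t)^n / (n.factorial : ℝ) :=
    div_nonneg (pow_nonneg (by linarith [ht.2]) n) (Nat.cast_nonneg _)
  simp only [NNReal.smul_def, Real.coe_toNNReal _ htn, smul_eq_mul]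
  ring





lemma isCompact_S (m : ℕ) {a : ℝ} (ha : 0 ≤ a) : IsCompact (S m a) := by
  have hclosed : IsClosed (S m a) := by
    have : S m a = (⋂ i, {x : Fin m → ℝ | 0 ≤ x i}) ∩ {x | ∑ i, x i ≤ a} := by
      ext x; simp [S]
    rw [this]
    exact (isClosed_iInter fun i =>
      isClosed_le continuous_const (continuous_apply i)).inter
      (isClosed_le (by fun_prop) continuous_const)
  apply IsCompact.of_isClosed_subset (isCompact_Icc (a := (0 : Fin m → ℝ)) (b := fun _ => a))
    hclosed
  intro x hx
  constructor
  · intro i; exact hx.1 i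
  · intro i
    calc x i ≤ ∑ j, x j := Finset.single_le_sum (fun j _ => hx.1 j) (Finset.mem_univ i)
    _ ≤ a := hx.2

theorem stmt_19' (n : ℕ) (r : ℝ) (hr : 0 < r)
    (α : ℝ) (hα : α ∈ Set.Ioo (0 : ℝ) 1) :
    HasDerivAt
      (fun a : ℝ =>
        ∫ x in {x : Fin (n+1) → ℝ | (∀ i, 0 ≤ x i) ∧ ∑ i, x i ≤ a},
          (2 * (∑ i, x i) * Real.log r -
            ((∑ i, x i * Real.log (x i)) + (1 - ∑ i, x i) * Real.log (1 - ∑ i, x i))))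
      ((α ^ n / (Nat.factorial n : ℝ)) *
        ((2 * Real.log r + ∑ k ∈ Finset.Icc 2 (n+1), (1 : ℝ) / k) * α -
          (α * Real.log α + (1 - α) * Real.log (1 - α)))) α := by
  obtain ⟨hα0, hα1⟩ := hα
  set f : ℝ → ℝ := fun s => 2 * s * Real.log r - (1 - s) * Real.log (1 - s) with hf
  have hfc : Continuous f := by
    apply Continuous.sub
    · fun_prop
    · exact Real.continuous_mul_log.comp (continuous_const.sub continuous_id)
  set g : ℝ → ℝ := fun t => t * Real.log t with hg
  have hgc : Continuous g := Real.continuous_mul_log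
  set A : ℝ → ℝ := fun a => ∫ t in (0:ℝ)..a, f t * (t^n / (n.factorial : ℝ)) with hA
  set B : ℝ → ℝ := fun a => a^(n+2) / ((n+2).factorial : ℝ) * (Real.log a - (Hsum (n+2) - 1))
    with hB
  set Φ : ℝ → ℝ := fun a => A a - (n+1) * B a with hΦ
  -- the identity on Ioo 0 1
  have hident : ∀ a ∈ Ioo (0:ℝ) 1,
      (∫ x in S (n+1) a,
        (2 * (∑ i, x i) * Real.log r -
          ((∑ i, x i * Real.log (x i)) + (1 - ∑ i, x i) * Real.log (1 - ∑ i, x i)))) = Φ a := by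
    intro a ha
    have ha0 : (0:ℝ) ≤ a := le_of_lt ha.1
    have hK := isCompact_S (n+1) ha0
    have hintf : IntegrableOn (fun x : Fin (n+1) → ℝ => f (∑ i, x i)) (S (n+1) a) volume :=
      ((hfc.comp (by fun_prop)).continuousOn).integrableOn_compact hK
    have hintg : ∀ i : Fin (n+1),
        IntegrableOn (fun x : Fin (n+1) → ℝ => g (x i)) (S (n+1) a) volume := fun i =>
      ((hgc.comp (continuous_apply i)).continuousOn).integrableOn_compact hK
    have hintgs : IntegrableOn (fun x : Fin (n+1) → ℝ => ∑ i, g (x i)) (S (n+1) a) volume := by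
      apply integrable_finset_sum
      intro i _
      exact hintg i
    have hpt : (fun x : Fin (n+1) → ℝ =>
        2 * (∑ i, x i) * Real.log r -
          ((∑ i, x i * Real.log (x i)) + (1 - ∑ i, x i) * Real.log (1 - ∑ i, x i)))
        = fun x => f (∑ i, x i) - ∑ i, g (x i) := by
      funext x
      rw [hf, hg]
      ring
    show (∫ x in S (n+1) a, _) = _
    rw [hpt, integral_sub hintf hintgs, integral_sum_comp n ha0 f hfc.measurable]
    have hsplit : ∫ x in S (n+1) a, ∑ i, g (x i) = ∑ i : Fin (n+1), ∫ x in S (n+1) a, g (x i) :=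
      integral_finset_sum Finset.univ (fun i _ => hintg i)
    rw [hsplit]
    have heach : ∀ i : Fin (n+1), (∫ x in S (n+1) a, g (x i)) = B a := by
      intro i
      rw [integral_eval_comp n i ha0 g hgc.measurable, hB]
      exact conv_eval n ha.1
    rw [Finset.sum_congr rfl (fun i _ => heach i), Finset.sum_const, Finset.card_univ,
      Fintype.card_fin]
    rw [hΦ, hA]
    push_cast
    ring
  -- derivative of Φ
  have hAd : HasDerivAt A (f α * (α^n / (n.factorial : ℝ))) α := by
    have hc : Continuous fun t => f t * (t^n / (n.factorial : ℝ)) := by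
      apply hfc.mul; fun_prop
    exact intervalIntegral.integral_hasDerivAt_right (hc.intervalIntegrable 0 α)
      (hc.stronglyMeasurableAtFilter _ _) hc.continuousAt
  have hBd : HasDerivAt B
      (((n:ℝ)+2) * α^(n+1) / ((n+2).factorial : ℝ) * (Real.log α - (Hsum (n+2) - 1))
        + α^(n+2) / ((n+2).factorial : ℝ) * α⁻¹) α := by
    have h1 : HasDerivAt (fun a : ℝ => a^(n+2) / ((n+2).factorial : ℝ))
        (((n:ℝ)+2) * α^(n+1) / ((n+2).factorial : ℝ)) α := by
      have := (hasDerivAt_pow (n+2) α).div_const (((n+2).factorial : ℝ))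
      simpa [Nat.cast_add] using this
    have h2 : HasDerivAt (fun a : ℝ => Real.log a - (Hsum (n+2) - 1)) α⁻¹ α :=
      (Real.hasDerivAt_log (ne_of_gt hα0)).sub_const _
    exact h1.mul h2
  have hΦd : HasDerivAt Φ
      (f α * (α^n / (n.factorial : ℝ))
        - (n+1) * (((n:ℝ)+2) * α^(n+1) / ((n+2).factorial : ℝ) * (Real.log α - (Hsum (n+2) - 1))
          + α^(n+2) / ((n+2).factorial : ℝ) * α⁻¹)) α := by
    exact hAd.sub (hBd.const_mul _)
  -- transfer along eventual equality
  have hev : (fun a : ℝ =>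
      ∫ x in {x : Fin (n+1) → ℝ | (∀ i, 0 ≤ x i) ∧ ∑ i, x i ≤ a},
        (2 * (∑ i, x i) * Real.log r -
          ((∑ i, x i * Real.log (x i)) + (1 - ∑ i, x i) * Real.log (1 - ∑ i, x i))))
      =ᶠ[nhds α] Φ := by
    filter_upwards [Ioo_mem_nhds hα0 hα1] with a ha
    exact hident a ha
  rw [Filter.EventuallyEq.hasDerivAt_iff hev]
  convert hΦd using 1
  case e'_4 => rfl
  case e'_5 => rfl
  -- value equality
  have hHs : Hsum (n+2) - 1 = (∑ k ∈ Finset.Icc 2 (n+1), (1:ℝ)/k) + 1/((n:ℝ)+2) := by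
    have h1 : Finset.Icc 1 (n+2) = insert 1 (Finset.Icc 2 (n+2)) := by
      ext k; simp [Finset.mem_Icc, Finset.mem_insert]; omega
    have h2 : Hsum (n+2) = 1 + ∑ k ∈ Finset.Icc 2 (n+2), (1:ℝ)/k := by
      rw [Hsum, h1, Finset.sum_insert (by simp)]
      norm_num
    have h3 : ∑ k ∈ Finset.Icc 2 (n+2), (1:ℝ)/k
        = (∑ k ∈ Finset.Icc 2 (n+1), (1:ℝ)/k) + 1/((n:ℝ)+2) := by
      rw [Finset.sum_Icc_succ_top (by omega : 2 ≤ n+2)]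
      push_cast
      ring
    rw [h2, h3]
    ring
  rw [hHs, hf]
  have hfac2 : ((n+2).factorial : ℝ) = ((n:ℝ)+2) * ((n:ℝ)+1) * (n.factorial : ℝ) := by
    rw [Nat.factorial_succ, Nat.factorial_succ]
    push_cast
    ring
  rw [hfac2]
  have hnf : (n.factorial : ℝ) ≠ 0 := by positivity
  have hα0' : α ≠ 0 := ne_of_gt hα0
  field_simp
  ring



end Stmt19

open MeasureTheory

theorem stmt_19 (m : ℕ) (hm : 1 ≤ m) (r : ℝ) (hr : 0 < r)
    (α : ℝ) (hα : α ∈ Set.Ioo (0 : ℝ) 1) :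
    HasDerivAt
      (fun a : ℝ =>
        ∫ x in {x : Fin m → ℝ | (∀ i, 0 ≤ x i) ∧ ∑ i, x i ≤ a},
          (2 * (∑ i, x i) * Real.log r -
            ((∑ i, x i * Real.log (x i)) + (1 - ∑ i, x i) * Real.log (1 - ∑ i, x i))))
      ((α ^ (m - 1) / (Nat.factorial (m - 1) : ℝ)) *
        ((2 * Real.log r + ∑ k ∈ Finset.Icc 2 m, (1 : ℝ) / k) * α -
          (α * Real.log α + (1 - α) * Real.log (1 - α)))) α := by
  obtain ⟨n, rfl⟩ : ∃ n, m = n + 1 := ⟨m - 1, by omega⟩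
  simpa only [Nat.add_sub_cancel] using Stmt19.stmt_19' n r hr α hα
end
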